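/- Let h(z₁,...,z_d) = Σ_{k ∈ [n]^d} c_k z₁^{k₁}···z_d^{k_d} be a nonzero polynomial with all coefficients c_k ∈ {0, ±1}. Then for any L ≥ 1 there exist z₁,...,z_d ∈ γ(L) such that |h(z₁,...,z_d)| ≥ exp(-C L n log n) for a constant C depending only on d. -/

import Mathlib

open Real Complex

lemma univar_step {n : ℕ} (x : Fin n → ℂ) (hx : Function.Injective x)
    (b : Fin n → ℂ) {j₀ : Fin n} (hb : b j₀ ≠ 0) :
    ∃ a : Fin n, (∑ j : Fin n, b j * x a ^ (j : ℕ)) ≠ 0 := by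
  by_contra h
  push_neg at h
  set P : Polynomial ℂ := ∑ j : Fin n, Polynomial.C (b j) * Polynomial.X ^ (j : ℕ) with hP
  have hcoeff : ∀ j : Fin n, P.coeff (j : ℕ) = b j := by
    intro j
    rw [hP, Polynomial.finset_sum_coeff]
    rw [Finset.sum_eq_single j]
    · simp
    · intro j' _ hj'
      rw [Polynomial.coeff_C_mul, Polynomial.coeff_X_pow, if_neg (by
        exact fun hh => hj' (Fin.val_injective hh.symm)), mul_zero]
    · simp
  have h0 : 0 < n := j₀.pos
  have hdeg : P.natDegree < n := by
    by_cases hP0 : P = 0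
    · simpa [hP0] using h0
    rw [Polynomial.natDegree_lt_iff_degree_lt hP0]
    apply lt_of_le_of_lt (Polynomial.degree_sum_le _ _)
    rw [Finset.sup_lt_iff (by exact_mod_cast WithBot.bot_lt_coe (n : ℕ))]
    intro j _
    apply lt_of_le_of_lt (Polynomial.degree_C_mul_X_pow_le _ _)
    exact_mod_cast j.isLt
  have hzero : P = 0 := by
    apply P.eq_zero_of_natDegree_lt_card_of_eval_eq_zero hx _ (by simpa using hdeg)
    intro a
    have := h a
    rw [hP]
    simpa [Polynomial.eval_finset_sum] using this
  exact hb (by rw [← hcoeff j₀, hzero, Polynomial.coeff_zero])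

lemma grid_step {n : ℕ} (x : Fin n → ℂ) (hx : Function.Injective x) :
    ∀ (d : ℕ) (c : (Fin d → Fin n) → ℂ), (∃ k, c k ≠ 0) →
    ∃ a : Fin d → Fin n, (∑ k : Fin d → Fin n, c k * ∏ i, x (a i) ^ (k i : ℕ)) ≠ 0 := by
  intro d
  induction d with
  | zero =>
      intro c ⟨k₀, hk₀⟩
      refine ⟨k₀, ?_⟩
      have : (Finset.univ : Finset (Fin 0 → Fin n)) = {k₀} := by
        apply Finset.eq_singleton_iff_unique_mem.mpr
        exact ⟨Finset.mem_univ _, fun y _ => Subsingleton.elim y k₀⟩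
      simp only [this, Finset.sum_singleton]
      simpa using hk₀
  | succ d ih =>
      intro c ⟨k₀, hk₀⟩
      obtain ⟨a', ha'⟩ := ih (fun k => c (Fin.cons (k₀ 0) k))
        ⟨Fin.tail k₀, by simpa [Fin.cons_self_tail] using hk₀⟩
      set b : Fin n → ℂ :=
        fun j => ∑ k' : Fin d → Fin n, c (Fin.cons j k') * ∏ i, x (a' i) ^ (k' i : ℕ) with hbdef
      obtain ⟨a₀, ha₀⟩ := univar_step x hx b (j₀ := k₀ 0) ha'
      set a : Fin (d+1) → Fin n := Fin.cons a₀ a' with hadef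
      refine ⟨a, ?_⟩
      have key : (∑ k : Fin (d+1) → Fin n,
          c k * ∏ i, x (a i) ^ (k i : ℕ)) = ∑ j : Fin n, b j * x a₀ ^ (j : ℕ) := by
        rw [← Fintype.sum_equiv (Fin.consEquiv (fun _ : Fin (d+1) => Fin n))
          (fun p => c (Fin.cons p.1 p.2) * ∏ i, x (a i) ^ ((Fin.cons p.1 p.2 : Fin (d+1) → Fin n) i : ℕ))
          (fun k => c k * ∏ i, x (a i) ^ (k i : ℕ)) (fun p => rfl)]
        rw [Fintype.sum_prod_type]
        apply Finset.sum_congr rfl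
        intro j _
        rw [hbdef, Finset.sum_mul]
        apply Finset.sum_congr rfl
        intro k' _
        rw [Fin.prod_univ_succ]
        simp only [hadef, Fin.cons_zero, Fin.cons_succ]
        ring
      rw [key]
      exact ha₀

section key
variable {p d n : ℕ} [hp : Fact p.Prime]

lemma key_bound (hn : 1 ≤ n) (hnp : n ≤ p)
    (c : (Fin d → Fin n) → ℤ) (hc : ∀ k, c k = 0 ∨ c k = 1 ∨ c k = -1)
    (hne : ∃ k, c k ≠ 0) :
    ∃ a : Fin d → Fin n,
      1 ≤ ((n : ℝ) ^ d) ^ p * ‖∑ k : Fin d → Fin n, (c k : ℂ) *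
        ∏ i, (Complex.exp (2 * π * I / p) ^ (a i : ℕ)) ^ (k i : ℕ)‖ := by
  classical
  have hp0 : p ≠ 0 := hp.out.pos.ne'
  set ζC : ℂ := Complex.exp (2 * π * I / p) with hζC
  have hprim : IsPrimitiveRoot ζC p := Complex.isPrimitiveRoot_exp p hp0
  -- grid lemma
  have hxinj : Function.Injective (fun j : Fin n => ζC ^ (j : ℕ)) := by
    intro j j' hjj
    exact Fin.val_injective (hprim.pow_inj (lt_of_lt_of_le j.isLt hnp)
      (lt_of_lt_of_le j'.isLt hnp) hjj)
  obtain ⟨a, ha⟩ := grid_step (fun j : Fin n => ζC ^ (j : ℕ)) hxinj d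
    (fun k => (c k : ℂ)) (by obtain ⟨k, hk⟩ := hne; exact ⟨k, by simpa using hk⟩)
  refine ⟨a, ?_⟩
  set P : ℕ+ := ⟨p, hp.out.pos⟩ with hP
  let K := CyclotomicField P ℚ
  haveI : NeZero ((P : ℕ) : ℚ) := ⟨by exact_mod_cast P.ne_zero⟩
  haveI : IsCyclotomicExtension {(P : ℕ)} ℚ K := CyclotomicField.isCyclotomicExtension (P : ℕ) ℚ
  haveI : FiniteDimensional ℚ K := IsCyclotomicExtension.finiteDimensional {(P : ℕ)} ℚ K
  set ζK : K := IsCyclotomicExtension.zeta P ℚ K with hζK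
  have hprimK : IsPrimitiveRoot ζK (P : ℕ) := IsCyclotomicExtension.zeta_spec P ℚ K
  have hpowK : ζK ^ p = 1 := hprimK.pow_eq_one
  have hirr : Irreducible (Polynomial.cyclotomic P ℚ) := Polynomial.cyclotomic.irreducible_rat P.pos
  -- the distinguished embedding
  set σ₁ : K →ₐ[ℚ] ℂ := (hprimK.embeddingsEquivPrimitiveRoots ℂ hirr).symm
    ⟨ζC, (mem_primitiveRoots hp.out.pos).mpr hprim⟩ with hσ₁
  have hσ₁ζ : σ₁ ζK = ζC := by
    have h1 := (hprimK.embeddingsEquivPrimitiveRoots ℂ hirr).apply_symm_apply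
      ⟨ζC, (mem_primitiveRoots hp.out.pos).mpr hprim⟩
    have h2 := hprimK.embeddingsEquivPrimitiveRoots_apply_coe ℂ hirr σ₁
    rw [hσ₁] at h2 ⊢
    rw [h1] at h2
    exact h2.symm ▸ rfl
  -- the algebraic integer
  set α : K := ∑ k : Fin d → Fin n, (c k : K) * ∏ i, (ζK ^ (a i : ℕ)) ^ (k i : ℕ) with hα
  have hσα : σ₁ α = ∑ k : Fin d → Fin n, (c k : ℂ) * ∏ i, (ζC ^ (a i : ℕ)) ^ (k i : ℕ) := by
    rw [hα, map_sum]
    refine Finset.sum_congr rfl fun k _ => ?_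
    rw [map_mul, map_prod]
    rw [map_intCast]; simp [map_pow, hσ₁ζ]
  have hαne : α ≠ 0 := by
    intro h0
    apply ha
    have h3 : σ₁ α = 0 := by rw [h0, map_zero]
    rw [hσα] at h3
    simpa using h3
  -- integrality
  have hζint : IsIntegral ℤ ζK := by
    refine ⟨Polynomial.X ^ p - Polynomial.C 1, Polynomial.monic_X_pow_sub_C 1 hp0, ?_⟩
    simp [hpowK]
  have hαint : IsIntegral ℤ α := by
    rw [hα]
    refine IsIntegral.sum _ fun k _ =>
      IsIntegral.mul ?_ (IsIntegral.prod _ fun i _ => (hζint.pow _).pow _)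
    have h4 : ((c k : ℤ) : K) = algebraMap ℤ K (c k) := by simp
    rw [h4]
    exact isIntegral_algebraMap
  have hNint : IsIntegral ℤ (Algebra.norm ℚ α) := Algebra.isIntegral_norm ℚ hαint
  obtain ⟨m, hm⟩ := IsIntegrallyClosed.isIntegral_iff.mp hNint
  have hNne : Algebra.norm ℚ α ≠ 0 := by
    rw [Algebra.norm_ne_zero_iff]
    exact hαne
  have hmne : m ≠ 0 := by
    rintro rfl
    apply hNne
    rw [← hm]
    simp
  -- product over embeddings
  have hprod : (algebraMap ℚ ℂ) (Algebra.norm ℚ α) = ∏ σ : K →ₐ[ℚ] ℂ, σ α :=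
    Algebra.norm_eq_prod_embeddings ℚ ℂ α
  have h1 : (1 : ℝ) ≤ ∏ σ : K →ₐ[ℚ] ℂ, ‖σ α‖ := by
    rw [← norm_prod, ← hprod, ← hm]
    have h5 : ((algebraMap ℚ ℂ) ((algebraMap ℤ ℚ) m)) = (m : ℂ) := by simp
    rw [h5, Complex.norm_intCast]
    exact_mod_cast Int.one_le_abs hmne
  -- bound on each embedding
  have hbound : ∀ σ : K →ₐ[ℚ] ℂ, ‖σ α‖ ≤ (n : ℝ) ^ d := by
    intro σ
    have hζσ : ‖σ ζK‖ = 1 := by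
      refine Complex.norm_eq_one_of_pow_eq_one ?_ hp0
      rw [← map_pow, hpowK, map_one]
    calc ‖σ α‖ ≤ ∑ k : Fin d → Fin n, ‖(c k : ℂ) * ∏ i, ((σ ζK) ^ (a i : ℕ)) ^ (k i : ℕ)‖ := by
          rw [hα, map_sum]
          refine le_trans (norm_sum_le _ _) (le_of_eq ?_)
          refine Finset.sum_congr rfl fun k _ => ?_
          rw [map_mul, map_prod]
          rw [map_intCast]; simp [map_pow]
      _ ≤ ∑ k : Fin d → Fin n, (1 : ℝ) := by
          refine Finset.sum_le_sum fun k _ => ?_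
          rw [norm_mul, norm_prod]
          have h2 : ‖(c k : ℂ)‖ ≤ 1 := by
            rcases hc k with h | h | h <;> simp [h]
          have h3 : ∀ i, ‖((σ ζK) ^ (a i : ℕ)) ^ (k i : ℕ)‖ = 1 := by
            intro i
            rw [norm_pow, norm_pow, hζσ, one_pow, one_pow]
          calc ‖(c k : ℂ)‖ * ∏ i, ‖((σ ζK) ^ (a i : ℕ)) ^ (k i : ℕ)‖
              = ‖(c k : ℂ)‖ := by rw [Finset.prod_congr rfl fun i _ => h3 i]; simp
            _ ≤ 1 := h2
      _ = (n : ℝ) ^ d := by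
          rw [Finset.sum_const, Finset.card_univ]
          simp [Fintype.card_fun]
  -- cardinality of embeddings
  have hcard : Fintype.card (K →ₐ[ℚ] ℂ) ≤ p := by
    rw [Fintype.card_congr (hprimK.embeddingsEquivPrimitiveRoots ℂ hirr), Fintype.card_coe]
    have hcp : (primitiveRoots (P : ℕ) ℂ).card = Nat.totient p := hprim.card_primitiveRoots
    rw [hcp]
    exact Nat.totient_le p
  -- split off σ₁
  have hnd1 : (1 : ℝ) ≤ (n : ℝ) ^ d := one_le_pow₀ (by exact_mod_cast hn)
  have hsplit : (1 : ℝ) ≤ ‖σ₁ α‖ * ((n : ℝ) ^ d) ^ p := by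
    have h4 : ∏ σ : K →ₐ[ℚ] ℂ, ‖σ α‖ =
        ‖σ₁ α‖ * ∏ σ ∈ Finset.univ.erase σ₁, ‖σ α‖ :=
      (Finset.mul_prod_erase _ _ (Finset.mem_univ σ₁)).symm
    have h5 : ∏ σ ∈ Finset.univ.erase σ₁, ‖σ α‖ ≤ ((n : ℝ) ^ d) ^ ((Finset.univ.erase σ₁).card) := by
      have := Finset.prod_le_prod (s := Finset.univ.erase σ₁)
        (f := fun σ => ‖σ α‖) (g := fun _ => (n : ℝ) ^ d)
        (fun σ _ => norm_nonneg _) (fun σ _ => hbound σ)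
      rwa [Finset.prod_const] at this
    have h6 : ((n : ℝ) ^ d) ^ ((Finset.univ.erase σ₁).card) ≤ ((n : ℝ) ^ d) ^ p := by
      apply pow_le_pow_right₀ hnd1
      calc (Finset.univ.erase σ₁).card ≤ (Finset.univ : Finset (K →ₐ[ℚ] ℂ)).card :=
            Finset.card_erase_le
        _ = Fintype.card (K →ₐ[ℚ] ℂ) := Finset.card_univ
        _ ≤ p := hcard
    calc (1 : ℝ) ≤ ∏ σ : K →ₐ[ℚ] ℂ, ‖σ α‖ := h1
      _ = ‖σ₁ α‖ * ∏ σ ∈ Finset.univ.erase σ₁, ‖σ α‖ := h4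
      _ ≤ ‖σ₁ α‖ * ((n : ℝ) ^ d) ^ p :=
          mul_le_mul_of_nonneg_left (h5.trans h6) (norm_nonneg _)
  rw [mul_comm] at hsplit
  refine le_trans hsplit (le_of_eq ?_)
  congr 1
  rw [hσα]

end key

set_option maxHeartbeats 1600000 in
/-- Multivariate Littlewood-type bound (Corollary): if
`h(z₁,…,z_d) = Σ_{k ∈ [n]^d} c_k z₁^{k₁}⋯z_d^{k_d}` is nonzero with coefficients in
`{0,±1}`, then for any `L ≥ 1` there is a point with each coordinate in `γ(L)` where
`|h| ≥ exp(-C L n log n)`, with `C` depending only on `d`. -/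
theorem stmt_5 (d : ℕ) (hd : 1 ≤ d) :
    ∃ C : ℝ, 0 < C ∧ ∀ n : ℕ, 2 ≤ n → ∀ c : (Fin d → Fin n) → ℤ,
      (∀ k, c k = 0 ∨ c k = 1 ∨ c k = -1) →
      (∃ k, c k ≠ 0) →
      ∀ L : ℝ, 1 ≤ L →
        ∃ z : Fin d → ℂ,
          (∀ i, ∃ θ : ℝ, |θ| ≤ π / L ∧ z i = Complex.exp (θ * Complex.I)) ∧
          Real.exp (-C * L * n * Real.log n) ≤
            ‖∑ k : Fin d → Fin n, (c k : ℂ) * ∏ i, z i ^ (k i : ℕ)‖ := by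
  have hd1 : (1 : ℝ) ≤ d := by exact_mod_cast hd
  refine ⟨5 * d, by linarith, ?_⟩
  intro n hn c hc hne L hL
  have hn0 : (0 : ℝ) < n := by positivity
  have hn2 : (2 : ℝ) ≤ n := by exact_mod_cast hn
  have hL0 : (0 : ℝ) < L := by linarith
  have hLn2 : (2 : ℝ) ≤ L * n := by nlinarith
  set m : ℕ := ⌈2 * L * n⌉₊ with hm
  have hmge : 2 * L * (n : ℝ) ≤ m := Nat.le_ceil _
  have hm0 : m ≠ 0 := by
    intro h0
    rw [h0] at hmge
    push_cast at hmge
    nlinarith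
  obtain ⟨p, hpprime, hplt, hple⟩ := Nat.exists_prime_lt_and_le_two_mul m hm0
  haveI : Fact p.Prime := ⟨hpprime⟩
  have hp0 : (0 : ℝ) < p := by exact_mod_cast hpprime.pos
  have hmlt : (m : ℝ) < 2 * L * n + 1 := Nat.ceil_lt_add_one (by positivity)
  have hmp : (m : ℝ) < p := by exact_mod_cast hplt
  have hnp : n ≤ p := by
    have h1 : (n : ℝ) ≤ m := by nlinarith
    have : n ≤ m := by exact_mod_cast h1
    omega
  have hple' : (p : ℝ) ≤ 2 * m := by exact_mod_cast hple
  have hp5 : (p : ℝ) ≤ 5 * (L * n) := by nlinarith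
  obtain ⟨a, hkey⟩ := key_bound (p := p) (by omega : 1 ≤ n) hnp c hc hne
  refine ⟨fun i => Complex.exp (2 * π * I / p) ^ (a i : ℕ), fun i => ?_, ?_⟩
  · refine ⟨2 * π * (a i : ℕ) / p, ?_, ?_⟩
    · have hai : ((a i : ℕ) : ℝ) + 1 ≤ (n : ℝ) := by
        exact_mod_cast (a i).isLt
      have hθ0 : 0 ≤ 2 * π * ((a i : ℕ) : ℝ) / p := by positivity
      rw [_root_.abs_of_nonneg hθ0, div_le_div_iff₀ hp0 hL0]
      have hπ : (0 : ℝ) < π := Real.pi_pos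
      have h2 : 2 * L * ((a i : ℕ) : ℝ) ≤ 2 * L * ((n : ℝ) - 1) := by nlinarith
      have h3 : 2 * L * ((n : ℝ) - 1) ≤ (p : ℝ) := by nlinarith
      nlinarith [mul_le_mul_of_nonneg_left (h2.trans h3) hπ.le]
    · dsimp only
      rw [← Complex.exp_nat_mul]
      congr 1
      push_cast
      field_simp
  · have hpos : (0 : ℝ) < ((n : ℝ) ^ d) ^ p := by positivity
    have harith : Real.exp (-(5 * (d : ℝ)) * L * n * Real.log n) ≤ (((n : ℝ) ^ d) ^ p)⁻¹ := by
      clear hkey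
      have hlog : Real.log (((n : ℝ) ^ d) ^ p) = (p : ℝ) * ((d : ℝ) * Real.log n) := by
        rw [Real.log_pow, Real.log_pow]
      have hexp : (((n : ℝ) ^ d) ^ p)⁻¹ = Real.exp (-((p : ℝ) * ((d : ℝ) * Real.log n))) := by
        rw [← hlog, Real.exp_neg, Real.exp_log hpos]
      rw [hexp]
      apply Real.exp_le_exp.mpr
      have hlogn : 0 ≤ Real.log n := Real.log_nonneg (by linarith)
      have hd0 : (0 : ℝ) ≤ d := by linarith
      have h8 : (p : ℝ) * (d : ℝ) ≤ 5 * (L * n) * d := by nlinarith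
      nlinarith
    refine le_trans harith ?_
    beta_reduce
    rw [inv_le_iff_one_le_mul₀ hpos]
    linarith [hkey]
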